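/- Suppose G is block-decomposable and in some block decomposition of G two edges between nodes x and y annihilate each other. Then either x and y lie in the same connected component of G, or both x and y are isolated nodes of G. -/

import Mathlib

/-- The six block shapes: spike, triangle, infork, outfork, diamond, square. -/
inductive BlockShape : Type
  | spike | triangle | infork | outfork | diamond | square
  deriving DecidableEq

namespace BlockShape

/-- Number of nodes of each block shape. -/
def numNodes : BlockShape → ℕ
  | spike => 2
  | triangle => 3
  | infork => 3
  | outfork => 3
  | diamond => 4
  | square => 5

/-- The directed edges of each block shape.
For the spike the nodes are `x = 0, y = 1` with edge `x → y`.
For the triangle the nodes are `0, 1, 2` with edges `0 → 1 → 2 → 0`.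
For the infork the nodes are `x = 0, y = 1, c = 2` with edges `x → c`, `y → c`.
For the outfork the nodes are `x = 0, y = 1, c = 2` with edges `c → x`, `c → y`.
For the diamond the nodes are `p = 0, q = 1, x = 2, y = 3` with boundary edges
`p → x, x → q, q → y, y → p` and mid-edge `q → p`.
For the square the nodes are the center `c = 0` and corners `v1 = 1, …, v4 = 4`, with
edges `v1 → v2 → v3 → v4 → v1`, `c → v1`, `v2 → c`, `c → v3`, `v4 → c`. -/
def edges : (s : BlockShape) → List (Fin s.numNodes × Fin s.numNodes)
  | spike => ([(0, 1)] : List (Fin 2 × Fin 2))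
  | triangle => ([(0, 1), (1, 2), (2, 0)] : List (Fin 3 × Fin 3))
  | infork => ([(0, 2), (1, 2)] : List (Fin 3 × Fin 3))
  | outfork => ([(2, 0), (2, 1)] : List (Fin 3 × Fin 3))
  | diamond => ([(0, 2), (2, 1), (1, 3), (3, 0), (1, 0)] : List (Fin 4 × Fin 4))
  | square => ([(1, 2), (2, 3), (3, 4), (4, 1), (0, 1), (2, 0), (0, 3), (4, 0)] :
      List (Fin 5 × Fin 5))

/-- The outlets (white nodes) of each block shape. -/
def IsOutlet : (s : BlockShape) → Fin s.numNodes → Prop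
  | spike, _ => True
  | triangle, _ => True
  | infork, i => (i : ℕ) = 2
  | outfork, i => (i : ℕ) = 2
  | diamond, i => (i : ℕ) = 0 ∨ (i : ℕ) = 1
  | square, i => (i : ℕ) = 0

/-- The degree of a node inside its block (number of incident edges). -/
def blockDeg (s : BlockShape) (i : Fin s.numNodes) : ℕ :=
  s.edges.countP fun e => decide (e.1 = i) || decide (e.2 = i)

end BlockShape

/-- A directed multigraph on a vertex type `V` is given by its edge multiplicity
function `G : V → V → ℕ`.  It is a directed graph in our sense if it has no loops
and no 2-cycles. -/
def IsDiGraph {V : Type} (G : V → V → ℕ) : Prop :=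
  (∀ v, G v v = 0) ∧ ∀ x y, G x y = 0 ∨ G y x = 0

/-- Degree of a node: the number of incident edges counted with multiplicity. -/
def degree {V : Type} [Fintype V] (G : V → V → ℕ) (v : V) : ℕ :=
  ∑ w, (G v w + G w v)

/-- Two nodes are adjacent if some edge joins them (in either direction). -/
def Adj {V : Type} (G : V → V → ℕ) (x y : V) : Prop := 0 < G x y + G y x

/-- `Reach G x y` : `y` lies in the connected component of `x`. -/
def Reach {V : Type} (G : V → V → ℕ) : V → V → Prop := Relation.ReflTransGen (Adj G)

/-- The connected component of a node, as a finset. -/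
noncomputable def component {V : Type} [Fintype V] (G : V → V → ℕ) (v : V) : Finset V :=
  letI := Classical.decPred fun w => Reach G v w
  Finset.univ.filter (Reach G v)

/-- Total number of block edges mapped onto the ordered pair `(x, y)` by the gluing data. -/
def blockMult {V : Type} [DecidableEq V] (n : ℕ) (shape : Fin n → BlockShape)
    (emb : (b : Fin n) → Fin (shape b).numNodes → V) (x y : V) : ℕ :=
  ∑ b : Fin n, (shape b).edges.countP fun e => decide (emb b e.1 = x ∧ emb b e.2 = y)

/-- A block decomposition of the directed multigraph `G` : a finite collection of blocks
together with an identification of their nodes with the nodes of `G` such that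
* each block is embedded injectively,
* nodes of two distinct blocks may be identified only if both are outlets,
* each outlet is identified with at most one other outlet (no vertex lies in three blocks),
* every vertex of `G` comes from some block, and
* the multiplicity of each edge of `G` is the number of block edges giving it minus the
  number of block edges giving the reversed edge (two parallel edges with the same
  direction are kept as a double edge; two parallel edges with opposite directions
  annihilate each other). -/
structure BlockDecomposition {V : Type} [Fintype V] [DecidableEq V] (G : V → V → ℕ) :
    Type where
  n : ℕ
  shape : Fin n → BlockShape
  emb : (b : Fin n) → Fin (shape b).numNodes → V
  emb_inj : ∀ b, Function.Injective (emb b)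
  glue_outlets : ∀ (b c : Fin n) (i : Fin (shape b).numNodes) (j : Fin (shape c).numNodes),
    emb b i = emb c j → b ≠ c → (shape b).IsOutlet i ∧ (shape c).IsOutlet j
  atMostTwo : ∀ (b c d : Fin n) (i : Fin (shape b).numNodes) (j : Fin (shape c).numNodes)
    (k : Fin (shape d).numNodes), emb b i = emb c j → emb b i = emb d k →
    b = c ∨ b = d ∨ c = d
  covers : ∀ v : V, ∃ b i, emb b i = v
  edge_eq : ∀ x y : V, G x y = blockMult n shape emb x y - blockMult n shape emb y x

/-- The number of block edges of a decomposition lying over the ordered pair `(x, y)`. -/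
def BlockDecomposition.mult {V : Type} [Fintype V] [DecidableEq V] {G : V → V → ℕ}
    (D : BlockDecomposition G) : V → V → ℕ :=
  blockMult D.n D.shape D.emb

/-- A graph is (block-)decomposable if it admits a block decomposition. -/
def Decomposable {V : Type} [Fintype V] [DecidableEq V] (G : V → V → ℕ) : Prop :=
  Nonempty (BlockDecomposition G)

/-- The edge `e` of block `b` is annihilated in the decomposition `D` : some edge of
another block lies over the same pair of vertices with the opposite direction. -/
def BlockDecomposition.EdgeAnnihilated {V : Type} [Fintype V] [DecidableEq V]
    {G : V → V → ℕ} (D : BlockDecomposition G) (b : Fin D.n)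
    (e : Fin (D.shape b).numNodes × Fin (D.shape b).numNodes) : Prop :=
  e ∈ (D.shape b).edges ∧
    ∃ (c : Fin D.n) (f : Fin (D.shape c).numNodes × Fin (D.shape c).numNodes),
      c ≠ b ∧ f ∈ (D.shape c).edges ∧ D.emb c f.1 = D.emb b e.2 ∧ D.emb c f.2 = D.emb b e.1
-- AUXBEGIN
section Aux

variable {V : Type} [DecidableEq V]

/-- edge count of one block over an ordered pair -/
def cnt (s : BlockShape) (φ : Fin s.numNodes → V) (u v : V) : ℕ :=
  s.edges.countP fun e => decide (φ e.1 = u ∧ φ e.2 = v)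

lemma blockMult_eq_sum_cnt (n : ℕ) (shape : Fin n → BlockShape)
    (emb : (b : Fin n) → Fin (shape b).numNodes → V) (u v : V) :
    blockMult n shape emb u v = ∑ b : Fin n, cnt (shape b) (emb b) u v := rfl

lemma cnt_ne_zero_left {s : BlockShape} {φ : Fin s.numNodes → V} {u v : V}
    (h : cnt s φ u v ≠ 0) : ∃ k, φ k = u := by
  obtain ⟨e, -, he⟩ := List.countP_pos_iff.1 (Nat.pos_of_ne_zero h)
  exact ⟨e.1, (of_decide_eq_true he).1⟩

lemma cnt_ne_zero_right {s : BlockShape} {φ : Fin s.numNodes → V} {u v : V}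
    (h : cnt s φ u v ≠ 0) : ∃ k, φ k = v := by
  obtain ⟨e, -, he⟩ := List.countP_pos_iff.1 (Nat.pos_of_ne_zero h)
  exact ⟨e.2, (of_decide_eq_true he).2⟩

lemma noLoop (s : BlockShape) : ∀ e ∈ s.edges, e.1 ≠ e.2 := by
  cases s <;> decide

lemma noTwoCycle (s : BlockShape) : ∀ e ∈ s.edges, ∀ f ∈ s.edges,
    ¬(f.1 = e.2 ∧ f.2 = e.1) := by
  cases s <;> decide

end Aux
-- AUXEND
example : True := trivial
section Aux2
variable {V : Type} [DecidableEq V]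

instance instDecOutlet (s : BlockShape) (i : Fin s.numNodes) : Decidable (s.IsOutlet i) := by
  cases s <;> simp only [BlockShape.IsOutlet] <;> infer_instance

lemma shape_desc (s : BlockShape) (φ : Fin s.numNodes → V) (hφ : Function.Injective φ)
    (e : Fin s.numNodes × Fin s.numNodes) (he : e ∈ s.edges)
    (h1 : s.IsOutlet e.1) (h2 : s.IsOutlet e.2) :
    (∀ u v, cnt s φ u v = if φ e.1 = u ∧ φ e.2 = v then 1 else 0) ∨
    (∃ z, z ≠ φ e.1 ∧ z ≠ φ e.2 ∧
      (∀ u v, cnt s φ u v = (if φ e.1 = u ∧ φ e.2 = v then 1 else 0)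
        + (if φ e.2 = u ∧ z = v then 1 else 0) + (if z = u ∧ φ e.1 = v then 1 else 0))) ∨
    (∃ z w, z ≠ φ e.1 ∧ z ≠ φ e.2 ∧ w ≠ φ e.1 ∧ w ≠ φ e.2 ∧ z ≠ w ∧
      (∃ k, φ k = z) ∧ (∀ k, φ k = z → ¬ s.IsOutlet k) ∧
      (∀ u v, cnt s φ u v = (if φ e.1 = u ∧ φ e.2 = v then 1 else 0)
        + (if φ e.2 = u ∧ z = v then 1 else 0) + (if z = u ∧ φ e.1 = v then 1 else 0)
        + (if φ e.1 = u ∧ w = v then 1 else 0) + (if w = u ∧ φ e.2 = v then 1 else 0))) := by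
  cases s with
  | spike =>
    left
    simp only [BlockShape.edges, List.mem_cons, List.not_mem_nil, or_false, BlockShape.numNodes] at he
    obtain rfl := List.mem_singleton.1 he
    intro u v
    simp [cnt, BlockShape.edges, List.countP_cons, BlockShape.numNodes]
  | triangle =>
    right; left
    simp only [BlockShape.edges, List.mem_cons, List.not_mem_nil, or_false, BlockShape.numNodes] at he
    rcases List.mem_cons.1 he |>.imp_right fun h => (List.mem_cons.1 h).imp_right List.mem_singleton.1 with he | he | he <;> subst he
    · exact ⟨φ (2 : Fin 3), hφ.ne (Fin.ne_of_val_ne (by decide)), hφ.ne (Fin.ne_of_val_ne (by decide)), fun u v => by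
        simp [cnt, BlockShape.edges, List.countP_cons, BlockShape.numNodes]; ring⟩
    · exact ⟨φ (0 : Fin 3), hφ.ne (Fin.ne_of_val_ne (by decide)), hφ.ne (Fin.ne_of_val_ne (by decide)), fun u v => by
        simp [cnt, BlockShape.edges, List.countP_cons, BlockShape.numNodes]; ring⟩
    · exact ⟨φ (1 : Fin 3), hφ.ne (Fin.ne_of_val_ne (by decide)), hφ.ne (Fin.ne_of_val_ne (by decide)), fun u v => by
        simp [cnt, BlockShape.edges, List.countP_cons, BlockShape.numNodes]; ring⟩
  | infork =>
    exact absurd ⟨h1, h2⟩ ((by decide : ∀ f ∈ BlockShape.infork.edges,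
      ¬(BlockShape.infork.IsOutlet f.1 ∧ BlockShape.infork.IsOutlet f.2)) e he)
  | outfork =>
    exact absurd ⟨h1, h2⟩ ((by decide : ∀ f ∈ BlockShape.outfork.edges,
      ¬(BlockShape.outfork.IsOutlet f.1 ∧ BlockShape.outfork.IsOutlet f.2)) e he)
  | diamond =>
    right; right
    have he' : e = ((1 : Fin 4), (0 : Fin 4)) :=
      (by intro f hf; simp only [BlockShape.edges, BlockShape.numNodes] at hf; rcases List.mem_cons.1 hf |>.imp_right fun h => (List.mem_cons.1 h).imp_right fun h => (List.mem_cons.1 h).imp_right fun h => (List.mem_cons.1 h).imp_right List.mem_singleton.1 with h | h | h | h | h <;> subst h <;> simp [BlockShape.IsOutlet] <;> rfl : ∀ f ∈ BlockShape.diamond.edges, BlockShape.diamond.IsOutlet f.1 →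
        BlockShape.diamond.IsOutlet f.2 → f = ((1 : Fin 4), (0 : Fin 4))) e he h1 h2
    clear he h1 h2
    subst he'
    refine ⟨φ (2 : Fin 4), φ (3 : Fin 4), hφ.ne (Fin.ne_of_val_ne (by decide)), hφ.ne (Fin.ne_of_val_ne (by decide)),
      hφ.ne (Fin.ne_of_val_ne (by decide)), hφ.ne (Fin.ne_of_val_ne (by decide)), hφ.ne (Fin.ne_of_val_ne (by decide)), ⟨(2 : Fin 4), rfl⟩,
      ?_, fun u v => by simp [cnt, BlockShape.edges, List.countP_cons, BlockShape.numNodes]; ring⟩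
    intro k hk
    have hk2 : k = (2 : Fin 4) := hφ hk
    subst hk2
    simp [BlockShape.IsOutlet]
  | square =>
    exact absurd ⟨h1, h2⟩ ((by decide : ∀ f ∈ BlockShape.square.edges,
      ¬(BlockShape.square.IsOutlet f.1 ∧ BlockShape.square.IsOutlet f.2)) e he)
end Aux2
section Aux3
variable {V : Type} [Fintype V] [DecidableEq V] {G : V → V → ℕ}

lemma mult_eq_one (D : BlockDecomposition G) (b : Fin D.n) {u v : V}
    (h : ∀ d, d ≠ b → cnt (D.shape d) (D.emb d) u v = 0) :
    D.mult u v = cnt (D.shape b) (D.emb b) u v := by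
  rw [BlockDecomposition.mult, blockMult_eq_sum_cnt]
  exact Finset.sum_eq_single_of_mem b (Finset.mem_univ b) fun d _ hd => h d hd

lemma mult_eq_two (D : BlockDecomposition G) {b c : Fin D.n} (hbc : b ≠ c) {u v : V}
    (h : ∀ d, d ≠ b → d ≠ c → cnt (D.shape d) (D.emb d) u v = 0) :
    D.mult u v = cnt (D.shape b) (D.emb b) u v + cnt (D.shape c) (D.emb c) u v := by
  rw [BlockDecomposition.mult, blockMult_eq_sum_cnt]
  rw [← Finset.sum_subset (Finset.subset_univ ({b, c} : Finset (Fin D.n)))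
    (fun d _ hd => by
      simp only [Finset.mem_insert, Finset.mem_singleton, not_or] at hd
      exact h d hd.1 hd.2)]
  exact Finset.sum_pair hbc

lemma adj_symm {a b : V} (h : Adj G a b) : Adj G b a := by
  unfold Adj at *; omega

lemma reach_symm {a b : V} (h : Reach G a b) : Reach G b a :=
  by haveI : Std.Symm (Adj G) := ⟨fun _ _ h => adj_symm h⟩; exact Relation.ReflTransGen.symmetric.symm _ _ h

lemma reach_two {a m b : V} (h1 : Adj G a m) (h2 : Adj G m b) : Reach G a b :=
  Relation.ReflTransGen.head h1 (Relation.ReflTransGen.single h2)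

lemma diamond_reach (D : BlockDecomposition G) (b : Fin D.n) (x y z w : V)
    (hxy : x ≠ y) (hzx : z ≠ x) (hzy : z ≠ y) (hzw : z ≠ w)
    (hzonly : ∀ d (k : Fin (D.shape d).numNodes), D.emb d k = z → d = b)
    (hcnt : ∀ u v, cnt (D.shape b) (D.emb b) u v =
      (if x = u ∧ y = v then 1 else 0) + (if y = u ∧ z = v then 1 else 0)
      + (if z = u ∧ x = v then 1 else 0) + (if x = u ∧ w = v then 1 else 0)
      + (if w = u ∧ y = v then 1 else 0)) :
    Reach G x y := by
  have edge' : ∀ u v, G u v = D.mult u v - D.mult v u := D.edge_eq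
  have hvl : ∀ d, d ≠ b → ∀ v', cnt (D.shape d) (D.emb d) z v' = 0 := by
    intro d hd v'
    by_contra h
    obtain ⟨k, hk⟩ := cnt_ne_zero_left h
    exact hd (hzonly d k hk)
  have hvr : ∀ d, d ≠ b → ∀ u', cnt (D.shape d) (D.emb d) u' z = 0 := by
    intro d hd u'
    by_contra h
    obtain ⟨k, hk⟩ := cnt_ne_zero_right h
    exact hd (hzonly d k hk)
  have m1 : D.mult z y = 0 := by
    rw [mult_eq_one D b (fun d hd => hvl d hd y), hcnt]
    simp [hxy, hzx, hzy, hzw, Ne.symm hzx, Ne.symm hzy, Ne.symm hzw, Ne.symm hxy]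
  have m2 : 1 ≤ D.mult y z := by
    refine le_trans ?_ (Finset.single_le_sum (f := fun d => cnt (D.shape d) (D.emb d) y z)
      (fun _ _ => Nat.zero_le _) (Finset.mem_univ b))
    rw [hcnt]
    simp [hxy, hzx, hzy, hzw, Ne.symm hzx, Ne.symm hzy, Ne.symm hzw, Ne.symm hxy]
  have m3 : D.mult x z = 0 := by
    rw [mult_eq_one D b (fun d hd => hvr d hd x), hcnt]
    simp [hxy, hzx, hzy, hzw, Ne.symm hzx, Ne.symm hzy, Ne.symm hzw, Ne.symm hxy]
  have m4 : 1 ≤ D.mult z x := by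
    refine le_trans ?_ (Finset.single_le_sum (f := fun d => cnt (D.shape d) (D.emb d) z x)
      (fun _ _ => Nat.zero_le _) (Finset.mem_univ b))
    rw [hcnt]
    simp [hxy, hzx, hzy, hzw, Ne.symm hzx, Ne.symm hzy, Ne.symm hzw, Ne.symm hxy]
  have g1 : 1 ≤ G z x := by rw [edge' z x, m3]; omega
  have g2 : 1 ≤ G y z := by rw [edge' y z, m1]; omega
  exact reach_two (m := z) (by unfold Adj; omega) (by unfold Adj; omega)
end Aux3
/-- if in some block decomposition of `G` two edges between `x` and `y`
annihilate each other, then either `x` and `y` lie in the same connected component of `G`,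
or both are isolated nodes. -/
theorem stmt_1 {V : Type} [Fintype V] [DecidableEq V] (G : V → V → ℕ)
    (hG : IsDiGraph G) (D : BlockDecomposition G) (x y : V)
    (hxy : 0 < D.mult x y) (hyx : 0 < D.mult y x) :
    Reach G x y ∨ (degree G x = 0 ∧ degree G y = 0) := by
  classical
  have edge' : ∀ u v, G u v = D.mult u v - D.mult v u := D.edge_eq
  -- extract the two annihilating block edges
  have extract : ∀ u v : V, 0 < D.mult u v → ∃ (b : Fin D.n)
      (e : Fin (D.shape b).numNodes × Fin (D.shape b).numNodes),
      e ∈ (D.shape b).edges ∧ D.emb b e.1 = u ∧ D.emb b e.2 = v := by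
    intro u v h
    rw [BlockDecomposition.mult, blockMult_eq_sum_cnt] at h
    obtain ⟨b, -, hb⟩ := Finset.exists_ne_zero_of_sum_ne_zero (Nat.pos_iff_ne_zero.1 h)
    obtain ⟨e, he, hpe⟩ := List.countP_pos_iff.1 (Nat.pos_of_ne_zero hb)
    exact ⟨b, e, he, (of_decide_eq_true hpe).1, (of_decide_eq_true hpe).2⟩
  obtain ⟨b, e, heb, he1, he2⟩ := extract x y hxy
  obtain ⟨c, f, hfc, hf1, hf2⟩ := extract y x hyx
  have hxyne : x ≠ y := by
    intro h
    exact noLoop _ e heb (D.emb_inj b (by rw [he1, he2, h]))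
  have hbc : b ≠ c := by
    rintro rfl
    exact noTwoCycle _ e heb f hfc
      ⟨D.emb_inj b (hf1.trans he2.symm), D.emb_inj b (hf2.trans he1.symm)⟩
  obtain ⟨oe1, of2⟩ := D.glue_outlets b c e.1 f.2 (he1.trans hf2.symm) hbc
  obtain ⟨oe2, of1⟩ := D.glue_outlets b c e.2 f.1 (he2.trans hf1.symm) hbc
  have hxB : ∀ d (k : Fin (D.shape d).numNodes), D.emb d k = x → d = b ∨ d = c := by
    intro d k hk
    rcases D.atMostTwo b c d e.1 f.2 k (he1.trans hf2.symm) (he1.trans hk.symm) with h | h | h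
    · exact absurd h hbc
    · exact Or.inl h.symm
    · exact Or.inr h.symm
  have hyB : ∀ d (k : Fin (D.shape d).numNodes), D.emb d k = y → d = b ∨ d = c := by
    intro d k hk
    rcases D.atMostTwo b c d e.2 f.1 k (he2.trans hf1.symm) (he2.trans hk.symm) with h | h | h
    · exact absurd h hbc
    · exact Or.inl h.symm
    · exact Or.inr h.symm
  have descB := shape_desc (D.shape b) (D.emb b) (D.emb_inj b) e heb oe1 oe2
  have descC := shape_desc (D.shape c) (D.emb c) (D.emb_inj c) f hfc of1 of2
  rw [he1, he2] at descB
  rw [hf1, hf2] at descC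
  have hmx1 : ∀ v', D.mult x v' = cnt (D.shape b) (D.emb b) x v' + cnt (D.shape c) (D.emb c) x v' := by
    intro v'
    refine mult_eq_two D hbc fun d hdb hdc => ?_
    by_contra h
    obtain ⟨k, hk⟩ := cnt_ne_zero_left h
    rcases hxB d k hk with rfl | rfl
    exacts [hdb rfl, hdc rfl]
  have hmx2 : ∀ u', D.mult u' x = cnt (D.shape b) (D.emb b) u' x + cnt (D.shape c) (D.emb c) u' x := by
    intro u'
    refine mult_eq_two D hbc fun d hdb hdc => ?_
    by_contra h
    obtain ⟨k, hk⟩ := cnt_ne_zero_right h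
    rcases hxB d k hk with rfl | rfl
    exacts [hdb rfl, hdc rfl]
  have hmy1 : ∀ v', D.mult y v' = cnt (D.shape b) (D.emb b) y v' + cnt (D.shape c) (D.emb c) y v' := by
    intro v'
    refine mult_eq_two D hbc fun d hdb hdc => ?_
    by_contra h
    obtain ⟨k, hk⟩ := cnt_ne_zero_left h
    rcases hyB d k hk with rfl | rfl
    exacts [hdb rfl, hdc rfl]
  have hmy2 : ∀ u', D.mult u' y = cnt (D.shape b) (D.emb b) u' y + cnt (D.shape c) (D.emb c) u' y := by
    intro u'
    refine mult_eq_two D hbc fun d hdb hdc => ?_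
    by_contra h
    obtain ⟨k, hk⟩ := cnt_ne_zero_right h
    rcases hyB d k hk with rfl | rfl
    exacts [hdb rfl, hdc rfl]
  rcases descB with hB | ⟨z, hz1, hz2, hB⟩ | ⟨z, w, hz1, hz2, hw1, hw2, hzw, ⟨k0, hk0⟩, hno, hB⟩
  · -- b spike
    rcases descC with hC | ⟨z', hz1', hz2', hC⟩ |
      ⟨z', w', hz1', hz2', hw1', hw2', hzw', ⟨k0', hk0'⟩, hno', hC⟩
    · -- spike, spike : both isolated
      right
      constructor
      · refine Finset.sum_eq_zero fun w _ => ?_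
        have key : D.mult x w = D.mult w x := by
          rw [hmx1 w, hmx2 w, hB, hB, hC, hC]
          by_cases h1 : x = w <;> by_cases h2 : y = w <;>
            (simp [h1, h2, hxyne, Ne.symm hxyne] <;> split_ifs <;> omega)
        rw [edge' x w, edge' w x, key]
        omega
      · refine Finset.sum_eq_zero fun w _ => ?_
        have key : D.mult y w = D.mult w y := by
          rw [hmy1 w, hmy2 w, hB, hB, hC, hC]
          by_cases h1 : x = w <;> by_cases h2 : y = w <;>
            (simp [h1, h2, hxyne, Ne.symm hxyne] <;> split_ifs <;> omega)
        rw [edge' y w, edge' w y, key]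
        omega
    · -- b spike, c triangle
      left
      have m1 : D.mult x z' = 1 := by
        rw [hmx1 z', hB, hC]
        simp [hxyne, Ne.symm hxyne, hz1', hz2', Ne.symm hz1', Ne.symm hz2']
      have m2 : D.mult z' x = 0 := by
        rw [hmx2 z', hB, hC]
        simp [hxyne, Ne.symm hxyne, hz1', hz2', Ne.symm hz1', Ne.symm hz2']
      have m3 : D.mult z' y = 1 := by
        rw [hmy2 z', hB, hC]
        simp [hxyne, Ne.symm hxyne, hz1', hz2', Ne.symm hz1', Ne.symm hz2']
      have m4 : D.mult y z' = 0 := by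
        rw [hmy1 z', hB, hC]
        simp [hxyne, Ne.symm hxyne, hz1', hz2', Ne.symm hz1', Ne.symm hz2']
      have g1 : 1 ≤ G x z' := by rw [edge' x z', m1, m2]
      have g2 : 1 ≤ G z' y := by rw [edge' z' y, m3, m4]
      exact reach_two (m := z') (by unfold Adj; omega) (by unfold Adj; omega)
    · -- c diamond
      left
      refine reach_symm (diamond_reach D c y x z' w' (Ne.symm hxyne) hz1' hz2' hzw' ?_ hC)
      intro d k hk
      by_contra hne
      exact hno' k0' hk0' (D.glue_outlets c d k0' k (hk0'.trans hk.symm) (Ne.symm hne)).1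
  · -- b triangle
    rcases descC with hC | ⟨z', hz1', hz2', hC⟩ |
      ⟨z', w', hz1', hz2', hw1', hw2', hzw', ⟨k0', hk0'⟩, hno', hC⟩
    · -- b triangle, c spike
      left
      have m1 : D.mult z x = 1 := by
        rw [hmx2 z, hB, hC]
        simp [hxyne, Ne.symm hxyne, hz1, hz2, Ne.symm hz1, Ne.symm hz2]
      have m2 : D.mult x z = 0 := by
        rw [hmx1 z, hB, hC]
        simp [hxyne, Ne.symm hxyne, hz1, hz2, Ne.symm hz1, Ne.symm hz2]
      have m3 : D.mult y z = 1 := by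
        rw [hmy1 z, hB, hC]
        simp [hxyne, Ne.symm hxyne, hz1, hz2, Ne.symm hz1, Ne.symm hz2]
      have m4 : D.mult z y = 0 := by
        rw [hmy2 z, hB, hC]
        simp [hxyne, Ne.symm hxyne, hz1, hz2, Ne.symm hz1, Ne.symm hz2]
      have g1 : 1 ≤ G z x := by rw [edge' z x, m1, m2]
      have g2 : 1 ≤ G y z := by rw [edge' y z, m3, m4]
      exact reach_two (m := z) (by unfold Adj; omega) (by unfold Adj; omega)
    · -- b triangle, c triangle
      by_cases hzz : z = z'
      · -- full cancellation : both x and y isolated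
        subst hzz
        right
        constructor
        · refine Finset.sum_eq_zero fun w _ => ?_
          have key : D.mult x w = D.mult w x := by
            rw [hmx1 w, hmx2 w, hB, hB, hC, hC]
            by_cases h1 : x = w <;> by_cases h2 : y = w <;> by_cases h3 : z = w <;>
              (simp [h1, h2, h3, hxyne, Ne.symm hxyne, hz1, hz2, Ne.symm hz1, Ne.symm hz2] <;>
                split_ifs <;> omega)
          rw [edge' x w, edge' w x, key]
          omega
        · refine Finset.sum_eq_zero fun w _ => ?_
          have key : D.mult y w = D.mult w y := by
            rw [hmy1 w, hmy2 w, hB, hB, hC, hC]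
            by_cases h1 : x = w <;> by_cases h2 : y = w <;> by_cases h3 : z = w <;>
              (simp [h1, h2, h3, hxyne, Ne.symm hxyne, hz1, hz2, Ne.symm hz1, Ne.symm hz2] <;>
                split_ifs <;> omega)
          rw [edge' y w, edge' w y, key]
          omega
      · left
        have m1 : D.mult z x = 1 := by
          rw [hmx2 z, hB, hC]
          simp [hxyne, Ne.symm hxyne, hz1, hz2, Ne.symm hz1, Ne.symm hz2, hzz, Ne.symm hzz,
            hz1', hz2', Ne.symm hz1', Ne.symm hz2']
        have m2 : D.mult x z = 0 := by
          rw [hmx1 z, hB, hC]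
          simp [hxyne, Ne.symm hxyne, hz1, hz2, Ne.symm hz1, Ne.symm hz2, hzz, Ne.symm hzz,
            hz1', hz2', Ne.symm hz1', Ne.symm hz2']
        have m3 : D.mult y z = 1 := by
          rw [hmy1 z, hB, hC]
          simp [hxyne, Ne.symm hxyne, hz1, hz2, Ne.symm hz1, Ne.symm hz2, hzz, Ne.symm hzz,
            hz1', hz2', Ne.symm hz1', Ne.symm hz2']
        have m4 : D.mult z y = 0 := by
          rw [hmy2 z, hB, hC]
          simp [hxyne, Ne.symm hxyne, hz1, hz2, Ne.symm hz1, Ne.symm hz2, hzz, Ne.symm hzz,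
            hz1', hz2', Ne.symm hz1', Ne.symm hz2']
        have g1 : 1 ≤ G z x := by rw [edge' z x, m1, m2]
        have g2 : 1 ≤ G y z := by rw [edge' y z, m3, m4]
        exact reach_two (m := z) (by unfold Adj; omega) (by unfold Adj; omega)
    · -- c diamond
      left
      refine reach_symm (diamond_reach D c y x z' w' (Ne.symm hxyne) hz1' hz2' hzw' ?_ hC)
      intro d k hk
      by_contra hne
      exact hno' k0' hk0' (D.glue_outlets c d k0' k (hk0'.trans hk.symm) (Ne.symm hne)).1
  · -- block b is a diamond: immediate reach through its dead ends
    left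
    refine diamond_reach D b x y z w hxyne hz1 hz2 hzw ?_ hB
    intro d k hk
    by_contra hne
    exact hno k0 hk0 (D.glue_outlets b d k0 k (hk0.trans hk.symm) (Ne.symm hne)).1
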